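/- Let Y be a p×n real matrix with p > n such that B := (1/n)YᵀY is invertible, let S⁺ := (1/n)Y·B⁻²·Yᵀ, 𝟙 the all-ones vector in ℝⁿ, and ȳ := (1/n)Y𝟙. Then ȳᵀ S⁺ ȳ = 1. -/

import Mathlib

open Matrix

theorem stmt_9 {p n : ℕ} (hn : 0 < n) (hpn : n < p) (Y : Matrix (Fin p) (Fin n) ℝ)
    (B : Matrix (Fin n) (Fin n) ℝ) (hBdef : B = ((n : ℝ)⁻¹) • (Yᵀ * Y))
    (hB : IsUnit B)
    (Sp : Matrix (Fin p) (Fin p) ℝ) (hSp : Sp = ((n : ℝ)⁻¹) • (Y * (B⁻¹ * B⁻¹) * Yᵀ))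
    (ybar : Fin p → ℝ) (hybar : ybar = ((n : ℝ)⁻¹) • Y.mulVec (fun _ => (1 : ℝ))) :
    ybar ⬝ᵥ Sp.mulVec ybar = 1 := by
  have hn' : (n : ℝ) ≠ 0 := Nat.cast_ne_zero.mpr hn.ne'
  have hdet : IsUnit B.det := (Matrix.isUnit_iff_isUnit_det B).mp hB
  have hYtY : Yᵀ * Y = (n : ℝ) • B := by
    rw [hBdef, smul_smul, mul_inv_cancel₀ hn', one_smul]
  have hBi : B⁻¹ * B = 1 := nonsing_inv_mul B hdet
  have hBi' : B * B⁻¹ = 1 := mul_nonsing_inv B hdet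
  set u : Fin n → ℝ := fun _ => (1 : ℝ) with hu
  have key1 : Y * (B⁻¹ * B⁻¹) * Yᵀ * Y = (n : ℝ) • (Y * B⁻¹) := by
    rw [Matrix.mul_assoc, hYtY, Matrix.mul_smul, Matrix.mul_assoc, Matrix.mul_assoc, hBi, Matrix.mul_one]
  have key2 : Yᵀ * (Y * B⁻¹) = (n : ℝ) • (1 : Matrix (Fin n) (Fin n) ℝ) := by
    rw [← Matrix.mul_assoc, hYtY, Matrix.smul_mul, hBi']
  have huu : u ⬝ᵥ u = (n : ℝ) := by
    simp [hu, dotProduct]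
  have hcore : (Y.mulVec u) ⬝ᵥ ((Y * B⁻¹).mulVec u) = (n : ℝ) * (n : ℝ) := by
    rw [show Y.mulVec u = vecMul u Yᵀ by rw [vecMul_transpose],
      dotProduct_mulVec, vecMul_vecMul, ← dotProduct_mulVec, key2]
    simp [huu, smul_mulVec, dotProduct_smul]
  rw [hybar, hSp, smul_mulVec, mulVec_smul, smul_dotProduct, dotProduct_smul,
    dotProduct_smul, mulVec_mulVec, key1, smul_mulVec, dotProduct_smul, hcore]
  simp only [smul_eq_mul]
  field_simp
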